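/- For every nontrivial tree T = (V,E) with maximum degree Δ(T) ≤ 3 (a binary tree) and leaf set L, ψ_q(T) = μ(T[V \ L]) + |L|. -/

import Mathlib

open Finset SimpleGraph
open scoped Classical

/-- The closed neighborhood `N[v]` of `v` in `G`, as a finset. -/
noncomputable def closedNbhd {V : Type*} [Fintype V] (G : SimpleGraph V) (v : V) : Finset V :=
  Finset.univ.filter fun u => u = v ∨ G.Adj u v

/-- The degree of `v` in `G`. -/
noncomputable def deg {V : Type*} [Fintype V] (G : SimpleGraph V) (v : V) : ℕ :=
  (Finset.univ.filter fun u => G.Adj v u).card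

/-- A coloring `c` is a quorum coloring if every vertex has at least half of its
closed neighborhood in its own color class. -/
noncomputable def IsQuorumColoring {V : Type*} [Fintype V] (G : SimpleGraph V) (c : V → ℕ) : Prop :=
  ∀ v : V, (closedNbhd G v).card ≤ 2 * ((closedNbhd G v).filter fun u => c u = c v).card

/-- Number of color classes (distinct used colors) of a coloring. -/
noncomputable def numClasses {V : Type*} [Fintype V] (c : V → ℕ) : ℕ :=
  (Finset.univ.image c).card

/-- The quorum coloring number `ψ_q(G)`. -/
noncomputable def quorumNumber {V : Type*} [Fintype V] (G : SimpleGraph V) : ℕ :=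
  sSup {k | ∃ c : V → ℕ, IsQuorumColoring G c ∧ numClasses c = k}

/-- A coloring is cost-effective if every vertex meets the quorum bound with equality:
`|N[v] ∩ π(v)| = ⌈|N[v]|/2⌉`. -/
noncomputable def IsCostEffective {V : Type*} [Fintype V] (G : SimpleGraph V) (c : V → ℕ) : Prop :=
  ∀ v : V, ((closedNbhd G v).filter fun u => c u = c v).card = ((closedNbhd G v).card + 1) / 2

/-- The matching number of a graph: the largest number of edges in a matching. -/
noncomputable def matchingNumber {W : Type*} (H : SimpleGraph W) : ℕ :=
  sSup {k | ∃ M : H.Subgraph, M.IsMatching ∧ M.edgeSet.ncard = k}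

section Aux
variable {V : Type*} [Fintype V] (G : SimpleGraph V)

lemma mem_closedNbhd {u v : V} : u ∈ closedNbhd G v ↔ u = v ∨ G.Adj u v := by
  simp [closedNbhd]

lemma closedNbhd_eq (v : V) : closedNbhd G v = insert v (Finset.univ.filter fun u => G.Adj v u) := by
  ext u
  rw [mem_closedNbhd, mem_insert, mem_filter]
  constructor
  · rintro (h | h)
    · exact Or.inl h
    · exact Or.inr ⟨mem_univ u, h.symm⟩
  · rintro (h | h)
    · exact Or.inl h
    · exact Or.inr h.2.symm

lemma card_closedNbhd (v : V) : (closedNbhd G v).card = deg G v + 1 := by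
  rw [closedNbhd_eq, Finset.card_insert_of_notMem, deg]
  simp

lemma self_mem_closedNbhd (v : V) : v ∈ closedNbhd G v := by
  simp [closedNbhd]

lemma quorum_iff (hΔ : ∀ v : V, deg G v ≤ 3) (c : V → ℕ) :
    IsQuorumColoring G c ↔ ∀ v, 2 ≤ deg G v → ∃ u, G.Adj v u ∧ c u = c v := by
  constructor
  · intro hq v hv
    have h1 := hq v
    rw [card_closedNbhd] at h1
    obtain ⟨u, hu, hune⟩ := Finset.exists_mem_ne
      (s := (closedNbhd G v).filter fun u => c u = c v) (by omega) v
    rw [mem_filter, mem_closedNbhd] at hu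
    rcases hu.1 with h | h
    · exact absurd h hune
    · exact ⟨u, h.symm, hu.2⟩
  · intro h v
    rw [card_closedNbhd]
    by_cases hv : 2 ≤ deg G v
    · obtain ⟨u, hadj, hcu⟩ := h v hv
      have hsub : {u, v} ⊆ (closedNbhd G v).filter fun u => c u = c v := by
        intro x hx
        simp only [mem_insert, Finset.mem_singleton] at hx
        rcases hx with rfl | rfl
        · exact mem_filter.mpr ⟨(mem_closedNbhd G).mpr (Or.inr hadj.symm), hcu⟩
        · exact mem_filter.mpr ⟨self_mem_closedNbhd G x, rfl⟩
      have hc : ({u, v} : Finset V).card ≤ _ := Finset.card_le_card hsub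
      rw [Finset.card_insert_of_notMem (by simp [hadj.ne']), Finset.card_singleton] at hc
      have := hΔ v
      omega
    · have : 1 ≤ ((closedNbhd G v).filter fun u => c u = c v).card :=
        Finset.card_pos.mpr ⟨v, mem_filter.mpr ⟨self_mem_closedNbhd G v, rfl⟩⟩
      omega

lemma exists_adj_of_connected (h : G.Connected) (hn : 1 < Fintype.card V) (v : V) :
    ∃ u, G.Adj v u := by
  obtain ⟨u, hu⟩ := Fintype.exists_ne_of_one_lt_card hn v
  obtain ⟨w⟩ := h.preconnected v u
  cases w with
  | nil => exact absurd rfl hu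
  | cons h p => exact ⟨_, h⟩

lemma deg_pos (h : G.Connected) (hn : 1 < Fintype.card V) (v : V) : 1 ≤ deg G v := by
  obtain ⟨u, hu⟩ := exists_adj_of_connected G h hn v
  exact Finset.card_pos.mpr ⟨u, by simp [hu]⟩

end Aux

section MN
variable {W : Type*} [Finite W] (H : SimpleGraph W)

lemma matching_bddAbove :
    BddAbove {k | ∃ M : H.Subgraph, M.IsMatching ∧ M.edgeSet.ncard = k} := by
  refine ⟨Nat.card (Sym2 W), ?_⟩
  rintro k ⟨M, _, rfl⟩
  rw [← Set.ncard_univ]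
  exact Set.ncard_le_ncard (Set.subset_univ _) Set.finite_univ

lemma le_matchingNumber {M : H.Subgraph} (hM : M.IsMatching) :
    M.edgeSet.ncard ≤ matchingNumber H :=
  le_csSup (matching_bddAbove H) ⟨M, hM, rfl⟩

lemma exists_max_matching :
    ∃ M : H.Subgraph, M.IsMatching ∧ M.edgeSet.ncard = matchingNumber H ∧
      ∀ x y : W, H.Adj x y → x ∈ M.verts ∨ y ∈ M.verts := by
  have h0 : 0 ∈ {k | ∃ M : H.Subgraph, M.IsMatching ∧ M.edgeSet.ncard = k} :=
    ⟨⊥, fun v hv => by simp [Subgraph.verts_bot] at hv, by simp [Subgraph.edgeSet_bot]⟩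
  have hmem := Nat.sSup_mem ⟨0, h0⟩ (matching_bddAbove H)
  obtain ⟨M, hM, hMc⟩ := hmem
  refine ⟨M, hM, hMc, ?_⟩
  by_contra hcon
  push_neg at hcon
  obtain ⟨x, y, hxy, hx, hy⟩ := hcon
  have hdisj : Disjoint M.support (H.subgraphOfAdj hxy).support := by
    rw [hM.support_eq_verts, H.support_subgraphOfAdj hxy]
    rw [Set.disjoint_right]
    rintro a (rfl | rfl) <;> assumption
  have hM' : (M ⊔ H.subgraphOfAdj hxy).IsMatching :=
    hM.sup (Subgraph.IsMatching.subgraphOfAdj hxy) hdisj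
  have hne : s(x, y) ∉ M.edgeSet := fun h => hx (M.edge_vert (Subgraph.mem_edgeSet.mp h))
  have hcard : (M ⊔ H.subgraphOfAdj hxy).edgeSet.ncard = matchingNumber H + 1 := by
    rw [Subgraph.edgeSet_sup]
    have : (H.subgraphOfAdj hxy).edgeSet = {s(x, y)} := by simp
    rw [this, Set.union_singleton, Set.ncard_insert_of_notMem hne (Set.toFinite _), hMc]; rfl
  have hle : matchingNumber H + 1 ≤ matchingNumber H := by
    rw [← hcard]
    exact le_matchingNumber H hM'
  omega

end MN

lemma upper_bound {V : Type*} [Fintype V] (G : SimpleGraph V)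
    (hC : G.Connected) (hn : 1 < Fintype.card V) (hΔ : ∀ v : V, deg G v ≤ 3)
    (c : V → ℕ) (hq : IsQuorumColoring G c) :
    numClasses c ≤
      matchingNumber (G.induce {v : V | deg G v ≠ 1}) +
        (Finset.univ.filter fun v => deg G v = 1).card := by
  set I : Set V := {v : V | deg G v ≠ 1} with hI
  set H := G.induce I with hH
  set L : Finset V := Finset.univ.filter fun v => deg G v = 1 with hL
  set S : Finset ℕ := Finset.univ.image c with hS
  set SL : Finset ℕ := L.image c with hSL
  set SI : Finset ℕ := S \ SL with hSI
  have hScard : S.card ≤ SL.card + SI.card := by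
    have : S ⊆ SL ∪ SI := by
      intro t ht
      by_cases h : t ∈ SL
      · exact Finset.mem_union_left _ h
      · exact Finset.mem_union_right _ (Finset.mem_sdiff.mpr ⟨ht, h⟩)
    calc S.card ≤ (SL ∪ SI).card := Finset.card_le_card this
      _ ≤ SL.card + SI.card := Finset.card_union_le _ _
  have hSLcard : SL.card ≤ L.card := Finset.card_image_le
  -- main step : SI.card ≤ matchingNumber H
  have main : SI.card ≤ matchingNumber H := by
    rcases SI.eq_empty_or_nonempty with he | hne
    · simp [he]
    -- every color in SI has an internal same-colored edge
    have key : ∀ t ∈ SI, ∃ p : I × I, H.Adj p.1 p.2 ∧ c p.1.1 = t ∧ c p.2.1 = t := by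
      intro t ht
      obtain ⟨hts, htl⟩ := Finset.mem_sdiff.mp ht
      obtain ⟨v, -, rfl⟩ := Finset.mem_image.mp hts
      have hv : deg G v ≠ 1 := by
        intro h
        exact htl (Finset.mem_image.mpr ⟨v, by simp [hL, h], rfl⟩)
      have hv2 : 2 ≤ deg G v := by
        have := deg_pos G hC hn v; omega
      obtain ⟨u, hadj, hcu⟩ := (quorum_iff G hΔ c).mp hq v hv2
      have hu : deg G u ≠ 1 := by
        intro h
        exact htl (Finset.mem_image.mpr ⟨u, by simp [hL, h], hcu⟩)
      exact ⟨(⟨v, hv⟩, ⟨u, hu⟩), hadj, rfl, hcu⟩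
    -- make the choice total
    obtain ⟨t0, ht0⟩ := hne
    have : Nonempty (I × I) := ⟨(key t0 ht0).choose⟩
    have key' : ∀ t : ℕ, ∃ p : I × I, t ∈ SI → (H.Adj p.1 p.2 ∧ c p.1.1 = t ∧ c p.2.1 = t) := by
      intro t
      by_cases ht : t ∈ SI
      · obtain ⟨p, hp⟩ := key t ht; exact ⟨p, fun _ => hp⟩
      · exact ⟨Classical.arbitrary _, fun h => absurd h ht⟩
    choose F hF using key'
    set A : ℕ → I := fun t => (F t).1 with hA
    set B : ℕ → I := fun t => (F t).2 with hB
    have hAdj : ∀ t ∈ SI, H.Adj (A t) (B t) := fun t ht => ((hF t) ht).1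
    have hcA : ∀ t ∈ SI, c (A t).1 = t := fun t ht => ((hF t) ht).2.1
    have hcB : ∀ t ∈ SI, c (B t).1 = t := fun t ht => ((hF t) ht).2.2
    set M : H.Subgraph :=
      { verts := {w : I | ∃ t ∈ SI, w = A t ∨ w = B t}
        Adj := fun w x => ∃ t ∈ SI, (w = A t ∧ x = B t) ∨ (w = B t ∧ x = A t)
        adj_sub := by
          rintro w x ⟨t, ht, (⟨rfl, rfl⟩ | ⟨rfl, rfl⟩)⟩
          · exact hAdj t ht
          · exact (hAdj t ht).symm
        edge_vert := by
          rintro w x ⟨t, ht, (⟨rfl, rfl⟩ | ⟨rfl, rfl⟩)⟩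
          · exact ⟨t, ht, Or.inl rfl⟩
          · exact ⟨t, ht, Or.inr rfl⟩
        symm := by
          refine ⟨?_⟩; rintro w x ⟨t, ht, (⟨rfl, rfl⟩ | ⟨rfl, rfl⟩)⟩
          · exact ⟨t, ht, Or.inr ⟨rfl, rfl⟩⟩
          · exact ⟨t, ht, Or.inl ⟨rfl, rfl⟩⟩ } with hM
    have hMadj : ∀ {w x : I}, M.Adj w x ↔ ∃ t ∈ SI, (w = A t ∧ x = B t) ∨ (w = B t ∧ x = A t) :=
      Iff.rfl
    have hMmatch : M.IsMatching := by
      rintro w ⟨t, ht, hw⟩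
      rcases hw with rfl | rfl
      · refine ⟨B t, ⟨t, ht, Or.inl ⟨rfl, rfl⟩⟩, ?_⟩
        rintro x ⟨t', ht', (⟨hw', rfl⟩ | ⟨hw', rfl⟩)⟩
        · have : t' = t := by rw [← hcA t' ht', ← hw', hcA t ht]
          rw [this]
        · have htt : t' = t := by rw [← hcB t' ht', ← hw', hcA t ht]
          rw [htt] at hw'
          exact absurd (hw' ▸ (hAdj t ht)) H.irrefl
      · refine ⟨A t, ⟨t, ht, Or.inr ⟨rfl, rfl⟩⟩, ?_⟩
        rintro x ⟨t', ht', (⟨hw', rfl⟩ | ⟨hw', rfl⟩)⟩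
        · have htt : t' = t := by rw [← hcA t' ht', ← hw', hcB t ht]
          rw [htt] at hw'
          exact absurd (hw' ▸ (hAdj t ht)).symm H.irrefl
        · have : t' = t := by rw [← hcB t' ht', ← hw', hcB t ht]
          rw [this]
    have hedge : M.edgeSet = (fun t => s(A t, B t)) '' ↑SI := by
      ext e
      induction e using Sym2.ind with
      | _ x y =>
        rw [Subgraph.mem_edgeSet]
        constructor
        · rintro ⟨t, ht, (⟨rfl, rfl⟩ | ⟨rfl, rfl⟩)⟩
          · exact ⟨t, ht, rfl⟩
          · exact ⟨t, ht, Sym2.eq_swap⟩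
        · rintro ⟨t, ht, he⟩
          rw [Sym2.eq_iff] at he
          rcases he with ⟨rfl, rfl⟩ | ⟨rfl, rfl⟩
          · exact ⟨t, ht, Or.inl ⟨rfl, rfl⟩⟩
          · exact ⟨t, ht, Or.inr ⟨rfl, rfl⟩⟩
    have hinj : Set.InjOn (fun t => s(A t, B t)) ↑SI := by
      intro t ht t' ht' hee
      simp only [Sym2.eq_iff] at hee
      rcases hee with ⟨ha, _⟩ | ⟨ha, _⟩
      · rw [← hcA t ht, ha, hcA t' ht']
      · rw [← hcA t ht, ha, hcB t' ht']
    have hcard : M.edgeSet.ncard = SI.card := by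
      rw [hedge, Set.ncard_image_of_injOn hinj, Set.ncard_coe_finset]
    calc SI.card = M.edgeSet.ncard := hcard.symm
      _ ≤ matchingNumber H := le_matchingNumber H hMmatch
  calc numClasses c = S.card := rfl
    _ ≤ SL.card + SI.card := hScard
    _ ≤ L.card + matchingNumber H := by omega
    _ = matchingNumber H + L.card := by omega

lemma lower_bound {V : Type*} [Fintype V] (G : SimpleGraph V)
    (hC : G.Connected) (hn : 1 < Fintype.card V) (hΔ : ∀ v : V, deg G v ≤ 3) :
    ∃ c : V → ℕ, IsQuorumColoring G c ∧
      numClasses c =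
        matchingNumber (G.induce {v : V | deg G v ≠ 1}) +
          (Finset.univ.filter fun v => deg G v = 1).card := by
  classical
  set I : Set V := {v : V | deg G v ≠ 1} with hIdef
  set H := G.induce I with hHdef
  have hmemI : ∀ v : V, v ∈ I ↔ deg G v ≠ 1 := fun v => Iff.rfl
  obtain ⟨M0, hM0, hM0card, hmax⟩ := exists_max_matching H
  -- partner function
  set pr : I → I := fun w => if h : w ∈ M0.verts then (hM0 h).choose else w with hprdef
  have hpr_adj : ∀ {w : I}, w ∈ M0.verts → M0.Adj w (pr w) := by
    intro w h
    simp only [hprdef, dif_pos h]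
    exact (hM0 h).choose_spec.1
  have hpr_eq : ∀ {w x : I}, M0.Adj w x → pr w = x := by
    intro w x hadj
    have h : w ∈ M0.verts := M0.edge_vert hadj
    simp only [hprdef, dif_pos h]
    exact ((hM0 h).choose_spec.2 x hadj).symm
  have hpr_mem : ∀ {w : I}, w ∈ M0.verts → pr w ∈ M0.verts :=
    fun h => M0.edge_vert (hpr_adj h).symm
  have hpr_invol : ∀ {w : I}, w ∈ M0.verts → pr (pr w) = w :=
    fun h => hpr_eq (hpr_adj h).symm
  -- injective labels
  set f : V → ℕ := fun v => ((Fintype.equivFin V) v : ℕ) with hfdef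
  have hf : Function.Injective f :=
    fun a b h => (Fintype.equivFin V).injective (Fin.val_injective h)
  -- matched predicate
  set Mtd : V → Prop := fun v => ∃ h : v ∈ I, (⟨v, h⟩ : I) ∈ M0.verts with hMtddef
  -- base color
  set basec : V → ℕ := fun v =>
    if h : v ∈ I then
      (if (⟨v, h⟩ : I) ∈ M0.verts then min (f v) (f (pr ⟨v, h⟩).1) else f v)
    else f v with hbdef
  -- chosen neighbor
  set nbr : V → V := fun v =>
    if h : ∃ u, G.Adj v u ∧ (u ∉ I ∨ Mtd u) then h.choose else v with hnbrdef
  -- the coloring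
  set c : V → ℕ := fun v =>
    if h : v ∈ I then
      (if (⟨v, h⟩ : I) ∈ M0.verts then basec v else basec (nbr v))
    else f v with hcdef
  -- basic facts
  have hb_leaf : ∀ v, v ∉ I → basec v = f v := by
    intro v h; simp only [hbdef, dif_neg h]
  have hb_mtd : ∀ v (h : v ∈ I), (⟨v, h⟩ : I) ∈ M0.verts →
      basec v = min (f v) (f (pr ⟨v, h⟩).1) := by
    intro v h hm; simp only [hbdef, dif_pos h, if_pos hm]
  have hc_leaf : ∀ v, v ∉ I → c v = f v := by
    intro v h; simp only [hcdef, dif_neg h]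
  have hc_mtd : ∀ v (h : v ∈ I), (⟨v, h⟩ : I) ∈ M0.verts → c v = basec v := by
    intro v h hm; simp only [hcdef, dif_pos h, if_pos hm]
  have hc_un : ∀ v (h : v ∈ I), (⟨v, h⟩ : I) ∉ M0.verts → c v = basec (nbr v) := by
    intro v h hm; simp only [hcdef, dif_pos h, if_neg hm]
  have hc_basec : ∀ v, (v ∉ I ∨ Mtd v) → c v = basec v := by
    rintro v (h | ⟨h, hm⟩)
    · rw [hc_leaf v h, hb_leaf v h]
    · exact hc_mtd v h hm
  -- the colors of a matched pair agree
  have hb_pair : ∀ w : I, w ∈ M0.verts → basec (w : V) = basec ((pr w : I) : V) := by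
    intro w hw
    have h1 : basec (w : V) = min (f w) (f (pr w).1) := hb_mtd w.1 w.2 hw
    have hpw : ((⟨(pr w : I).1, (pr w : I).2⟩ : I)) ∈ M0.verts := hpr_mem hw
    have h2 : basec ((pr w : I) : V) = min (f (pr w).1) (f ((pr (pr w)) : I).1) :=
      hb_mtd (pr w).1 (pr w).2 hpw
    rw [h1, h2, hpr_invol hw, min_comm]
  -- neighbor choice works
  have hnbr_spec : ∀ v (h : v ∈ I), (⟨v, h⟩ : I) ∉ M0.verts →
      G.Adj v (nbr v) ∧ (nbr v ∉ I ∨ Mtd (nbr v)) := by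
    intro v h hm
    have hex : ∃ u, G.Adj v u ∧ (u ∉ I ∨ Mtd u) := by
      by_cases hint : ∃ u, G.Adj v u ∧ u ∈ I
      · obtain ⟨u, hu, hui⟩ := hint
        have hHadj : H.Adj ⟨v, h⟩ ⟨u, hui⟩ := hu
        rcases hmax _ _ hHadj with hv' | hu'
        · exact absurd hv' hm
        · exact ⟨u, hu, Or.inr ⟨hui, hu'⟩⟩
      · push_neg at hint
        obtain ⟨u, hu⟩ := exists_adj_of_connected G hC hn v
        exact ⟨u, hu, Or.inl (hint u hu)⟩
    simp only [hnbrdef, dif_pos hex]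
    exact hex.choose_spec
  -- quorum coloring
  have hquorum : IsQuorumColoring G c := by
    rw [quorum_iff G hΔ c]
    intro v hv2
    have h : v ∈ I := by
      rw [hmemI]; omega
    by_cases hm : (⟨v, h⟩ : I) ∈ M0.verts
    · refine ⟨(pr ⟨v, h⟩ : I).1, ?_, ?_⟩
      · exact M0.adj_sub (hpr_adj hm)
      · have hu : c ((pr ⟨v, h⟩ : I) : V) = basec ((pr ⟨v, h⟩ : I) : V) :=
          hc_mtd _ (pr ⟨v, h⟩).2 (hpr_mem hm)
        rw [hu, hc_mtd v h hm, hb_pair ⟨v, h⟩ hm]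
    · obtain ⟨hadj, hlm⟩ := hnbr_spec v h hm
      refine ⟨nbr v, hadj, ?_⟩
      rw [hc_un v h hm, hc_basec (nbr v) hlm]
  -- counting classes
  set Lf : Finset V := Finset.univ.filter fun v => deg G v = 1 with hLdef
  set Mv : Finset V := Finset.univ.filter Mtd with hMvdef
  have hnotI : ∀ v : V, v ∉ I ↔ deg G v = 1 := by
    intro v; rw [hmemI]; exact not_not
  have himg : Finset.univ.image c = (Lf.image f) ∪ (Mv.image basec) := by
    ext t
    constructor
    · intro ht
      obtain ⟨v, -, rfl⟩ := Finset.mem_image.mp ht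
      by_cases h : v ∈ I
      · by_cases hm : (⟨v, h⟩ : I) ∈ M0.verts
        · refine Finset.mem_union_right _ (Finset.mem_image.mpr ⟨v, ?_, (hc_mtd v h hm).symm⟩)
          simp only [hMvdef, Finset.mem_filter, Finset.mem_univ, true_and]
          exact ⟨h, hm⟩
        · obtain ⟨hadj, hlm⟩ := hnbr_spec v h hm
          rcases hlm with hl | hmtd
          · refine Finset.mem_union_left _ (Finset.mem_image.mpr ⟨nbr v, ?_, ?_⟩)
            · simp only [hLdef, Finset.mem_filter, Finset.mem_univ, true_and]
              exact (hnotI _).mp hl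
            · rw [hc_un v h hm, hb_leaf _ hl]
          · refine Finset.mem_union_right _ (Finset.mem_image.mpr ⟨nbr v, ?_, ?_⟩)
            · simp only [hMvdef, Finset.mem_filter, Finset.mem_univ, true_and]
              exact hmtd
            · rw [hc_un v h hm]
      · exact Finset.mem_union_left _ (Finset.mem_image.mpr ⟨v, by
          simp only [hLdef, Finset.mem_filter, Finset.mem_univ, true_and]
          exact (hnotI _).mp h, (hc_leaf v h).symm⟩)
    · intro ht
      rcases Finset.mem_union.mp ht with ht | ht
      · obtain ⟨a, ha, rfl⟩ := Finset.mem_image.mp ht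
        simp only [hLdef, Finset.mem_filter, Finset.mem_univ, true_and] at ha
        have : a ∉ I := (hnotI _).mpr ha
        exact Finset.mem_image.mpr ⟨a, Finset.mem_univ a, hc_leaf a this⟩
      · obtain ⟨a, ha, rfl⟩ := Finset.mem_image.mp ht
        simp only [hMvdef, Finset.mem_filter, Finset.mem_univ, true_and] at ha
        obtain ⟨h, hm⟩ := ha
        exact Finset.mem_image.mpr ⟨a, Finset.mem_univ a, hc_mtd a h hm⟩
  have hdisj : Disjoint (Lf.image f) (Mv.image basec) := by
    rw [Finset.disjoint_left]
    intro t htL htM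
    obtain ⟨a, ha, rfl⟩ := Finset.mem_image.mp htL
    obtain ⟨b, hb, hfb⟩ := Finset.mem_image.mp htM
    simp only [hLdef, Finset.mem_filter, Finset.mem_univ, true_and] at ha
    simp only [hMvdef, Finset.mem_filter, Finset.mem_univ, true_and] at hb
    obtain ⟨h, hm⟩ := hb
    rw [hb_mtd b h hm] at hfb
    rcases min_choice (f b) (f (pr ⟨b, h⟩).1) with hmin | hmin <;> rw [hmin] at hfb
    · have : b = a := hf hfb
      subst this
      exact ((hmemI b).mp h) ha
    · have : ((pr ⟨b, h⟩ : I) : V) = a := hf hfb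
      have h2 := (pr ⟨b, h⟩).2
      rw [this] at h2
      exact ((hmemI a).mp h2) ha
  -- edge count
  set em : Sym2 I → ℕ :=
    Sym2.lift ⟨fun x y => min (f x.1) (f y.1), fun x y => min_comm _ _⟩ with hemdef
  have hMvcard : (Mv.image basec).card = matchingNumber H := by
    have hset : ↑(Mv.image basec) = em '' M0.edgeSet := by
      ext t
      simp only [Finset.coe_image, Set.mem_image, Finset.mem_coe]
      constructor
      · rintro ⟨b, hb, rfl⟩
        simp only [hMvdef, Finset.mem_filter, Finset.mem_univ, true_and] at hb
        obtain ⟨h, hm⟩ := hb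
        refine ⟨s(⟨b, h⟩, pr ⟨b, h⟩), Subgraph.mem_edgeSet.mpr (hpr_adj hm), ?_⟩
        rw [hemdef, Sym2.lift_mk]
        exact (hb_mtd b h hm).symm
      · rintro ⟨e, he, rfl⟩
        induction e using Sym2.ind with
        | _ x y =>
          rw [Subgraph.mem_edgeSet] at he
          refine ⟨x.1, ?_, ?_⟩
          · simp only [hMvdef, Finset.mem_filter, Finset.mem_univ, true_and]
            exact ⟨x.2, M0.edge_vert he⟩
          · rw [hemdef, Sym2.lift_mk, hb_mtd x.1 x.2 (M0.edge_vert he), hpr_eq he]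
    have hinj : ∀ e ∈ M0.edgeSet, ∀ e' ∈ M0.edgeSet, em e = em e' → e = e' := by
      intro e
      induction e using Sym2.ind with
      | _ x y =>
        intro he e'
        induction e' using Sym2.ind with
        | _ x' y' =>
          intro he' hee
          rw [Subgraph.mem_edgeSet] at he he'
          rw [hemdef, Sym2.lift_mk, Sym2.lift_mk] at hee
          have hee2 : min (f x.1) (f y.1) = min (f x'.1) (f y'.1) := hee
          have hprx : pr x = y := hpr_eq he
          have hprx' : pr x' = y' := hpr_eq he'
          have hpry : pr y = x := hpr_eq he.symm
          have hpry' : pr y' = x' := hpr_eq he'.symm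
          rcases min_choice (f x.1) (f y.1) with h1 | h1 <;>
            rcases min_choice (f x'.1) (f y'.1) with h2 | h2 <;>
            rw [h1, h2] at hee2
          · have hx : x = x' := Subtype.ext (hf hee2)
            rw [Sym2.eq_iff]
            exact Or.inl ⟨hx, by rw [← hprx, ← hprx', hx]⟩
          · have hx : x = y' := Subtype.ext (hf hee2)
            rw [Sym2.eq_iff]
            exact Or.inr ⟨hx, by rw [← hprx, hx, hpry']⟩
          · have hx : y = x' := Subtype.ext (hf hee2)
            rw [Sym2.eq_iff]
            exact Or.inr ⟨by rw [← hpry, hx, hprx'], hx⟩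
          · have hx : y = y' := Subtype.ext (hf hee2)
            rw [Sym2.eq_iff]
            exact Or.inl ⟨by rw [← hpry, ← hpry', hx], hx⟩
    have hinj' : Set.InjOn em M0.edgeSet := fun a ha b hb => hinj a ha b hb
    calc (Mv.image basec).card = (↑(Mv.image basec) : Set ℕ).ncard :=
          (Set.ncard_coe_finset _).symm
      _ = (em '' M0.edgeSet).ncard := by rw [hset]
      _ = M0.edgeSet.ncard := Set.ncard_image_of_injOn hinj'
      _ = matchingNumber H := hM0card
  refine ⟨c, hquorum, ?_⟩
  rw [numClasses, himg, Finset.card_union_of_disjoint hdisj,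
    Finset.card_image_of_injective _ hf, hMvcard]
  omega


/-- for a nontrivial binary tree (max degree at most 3),
`ψ_q(T) = μ(T[V \ L]) + |L|`. -/
theorem quorumNumber_binary_tree {V : Type*} [Fintype V] (G : SimpleGraph V)
    (hT : G.IsTree) (hn : 1 < Fintype.card V) (hΔ : ∀ v : V, deg G v ≤ 3) :
    quorumNumber G =
      matchingNumber (G.induce {v : V | deg G v ≠ 1}) +
        (Finset.univ.filter fun v => deg G v = 1).card := by
  have hC : G.Connected := hT.isConnected
  obtain ⟨c0, hq0, hcount⟩ := lower_bound G hC hn hΔ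
  have hbdd : BddAbove {k | ∃ c : V → ℕ, IsQuorumColoring G c ∧ numClasses c = k} := by
    refine ⟨Fintype.card V, ?_⟩
    rintro k ⟨c, -, rfl⟩
    calc numClasses c ≤ Finset.univ.card := Finset.card_image_le
      _ = Fintype.card V := Finset.card_univ
  refine le_antisymm ?_ ?_
  · refine csSup_le ⟨numClasses c0, c0, hq0, rfl⟩ ?_
    rintro k ⟨c, hc, rfl⟩
    exact upper_bound G hC hn hΔ c hc
  · rw [← hcount]
    exact le_csSup hbdd ⟨c0, hq0, rfl⟩
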